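/- Let k ≥ 3 be an integer and let (n_1, …, n_k) be positive integers with n_1 ≥ n_2 ≥ … ≥ n_k, and set p = n_1 + … + n_k. Suppose p is even and n_1 = p/2 − 1. Then every k-partite graph G with part sizes (n_1, …, n_k) having at least (4 − 2p + 2n_1 + Σ_{i=1}^{k} n_i(p − n_i))/2 edges is hamiltonian. -/

import Mathlib

open SimpleGraph

section HamiltonianHelpers

open SimpleGraph Walk List

variable {V : Type*} [DecidableEq V] {H : SimpleGraph V}

lemma exists_walk_of_chain (H : SimpleGraph V) (a : V) (l : List V) (b : V)
    (h : List.Chain H.Adj a (l ++ [b])) : ∃ w : H.Walk a b, w.support = a :: (l ++ [b]) := by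
  induction l generalizing a with
  | nil =>
    unfold List.Chain at h; rw [List.nil_append, List.chain_cons] at h
    exact ⟨Walk.cons h.1 Walk.nil, by simp⟩
  | cons c l ih =>
    unfold List.Chain at h; rw [List.cons_append, List.chain_cons] at h
    obtain ⟨w, hw⟩ := ih c h.2
    exact ⟨Walk.cons h.1 w, by simp [hw]⟩

lemma length_eq_one_of_edge {x y : V} {W : H.Walk x y} (hW : W.IsPath)
    (he : s(x, y) ∈ W.edges) : W.length = 1 := by
  cases W with
  | nil => simp at he
  | @cons _ w _ h W' =>
    rw [Walk.edges_cons, List.mem_cons] at he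
    rcases he with he | he
    · rw [Sym2.eq_iff] at he
      rcases he with ⟨-, rfl⟩ | ⟨rfl, rfl⟩
      · have : W'.IsPath := hW.of_cons
        rw [Walk.isPath_iff_eq_nil] at this
        simp [this]
      · exact absurd rfl h.ne
    · exfalso
      have hx : x ∈ W'.support := Walk.fst_mem_support_of_mem_edges W' he
      have := hW.support_nodup
      rw [Walk.support_cons, List.nodup_cons] at this
      exact this.1 hx

/-- From a "cycle list" `a :: t` (closing back to `a`) covering all vertices, the graph
is hamiltonian. -/
lemma isHamiltonian_of_chain [Fintype V] (a : V) (t : List V) (ht2 : 2 ≤ t.length)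
    (hch : List.Chain H.Adj a (t ++ [a])) (hnd : (a :: t).Nodup) (hcov : ∀ x, x ∈ a :: t) :
    H.IsHamiltonian := by
  obtain ⟨b, t₂, rfl⟩ : ∃ b t₂, t = b :: t₂ := by
    cases t with
    | nil => simp at ht2
    | cons b t₂ => exact ⟨b, t₂, rfl⟩
  unfold List.Chain at hch; rw [List.cons_append, List.chain_cons] at hch
  obtain ⟨hab, hch₂⟩ := hch
  obtain ⟨W, hWs⟩ := exists_walk_of_chain H b t₂ a hch₂
  rw [List.nodup_cons] at hnd
  have hab' : a ∉ b :: t₂ := hnd.1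
  have htnd : ((b :: t₂) ++ [a]).Nodup := by
    rw [List.nodup_append]
    exact ⟨hnd.2, List.nodup_singleton a, by
      intro x hx y hy hxy
      rw [List.mem_singleton] at hy
      subst hxy; subst hy; exact hab' hx⟩
  have hWnodup : W.support.Nodup := by rw [hWs, ← List.cons_append]; exact htnd
  have hWpath : W.IsPath := Walk.IsPath.mk' hWnodup
  have hWlen : W.length = t₂.length + 1 := by
    have := W.length_support
    rw [hWs] at this
    simp at this
    omega
  have hedge : s(a, b) ∉ W.edges := by
    intro hmem
    have : W.length = 1 := length_eq_one_of_edge hWpath (Sym2.eq_swap ▸ hmem)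
    rw [hWlen] at this
    simp at ht2
    omega
  have hcyc : (Walk.cons hab W).IsCycle := (Walk.cons_isCycle_iff W hab).2 ⟨hWpath, hedge⟩
  refine fun _ => ⟨a, Walk.cons hab W, ?_⟩
  rw [Walk.isHamiltonianCycle_iff_isCycle_and_support_count_tail_eq_one]
  refine ⟨hcyc, fun x => ?_⟩
  have hsupp : (Walk.cons hab W).support.tail = (b :: t₂) ++ [a] := by
    rw [Walk.support_cons, List.tail_cons, hWs]; simp
  rw [hsupp]
  apply List.count_eq_one_of_mem
  · rw [List.nodup_append]
    exact ⟨hnd.2, List.nodup_singleton a, fun x hx y hy => by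
      rw [List.mem_singleton] at hy; intro hxy; subst hxy; subst hy; exact hab' hx⟩
  · rcases List.mem_cons.mp (hcov x) with hx | hx
    · subst hx; simp
    · exact List.mem_append_left _ hx

lemma top_isHamiltonian [Fintype V] (h3 : 3 ≤ Fintype.card V) :
    (⊤ : SimpleGraph V).IsHamiltonian := by
  classical
  obtain ⟨a, t, hl⟩ : ∃ a t, (Finset.univ : Finset V).toList = a :: t := by
    have hne : (Finset.univ : Finset V).toList ≠ [] := by
      intro h
      have := Finset.length_toList (Finset.univ : Finset V)
      rw [h] at this
      simp [Finset.card_univ] at this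
      omega
    rcases h : (Finset.univ : Finset V).toList with _ | ⟨a, t⟩
    · exact absurd h hne
    · exact ⟨_, _, rfl⟩
  have hnd : (a :: t).Nodup := hl ▸ Finset.nodup_toList _
  have hcov : ∀ x : V, x ∈ a :: t := fun x => hl ▸ (Finset.mem_toList.2 (Finset.mem_univ x))
  have hlen : (a :: t).length = Fintype.card V := by
    rw [← hl, Finset.length_toList, Finset.card_univ]
  have ht2 : 2 ≤ t.length := by simp at hlen; omega
  have htne : t ≠ [] := by intro h; rw [h] at ht2; simp at ht2
  apply isHamiltonian_of_chain a t ht2 ?_ hnd hcov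
  have hch' : List.IsChain (⊤ : SimpleGraph V).Adj ((a :: t) ++ [a]) := by
    rw [List.isChain_append]
    refine ⟨List.Pairwise.isChain (hnd.imp fun hne => by simp [hne]), by simp, ?_⟩
    intro x hx y hy
    rw [List.getLast?_eq_getLast (by simp)] at hx
    simp only [List.head?_cons, Option.mem_some_iff] at hy hx
    subst hx; subst hy
    rw [List.getLast_cons htne]
    simp only [SimpleGraph.top_adj]
    intro h
    rw [List.nodup_cons] at hnd
    exact hnd.1 (h ▸ List.getLast_mem htne)
  rw [show (a :: t) ++ [a] = a :: (t ++ [a]) by simp] at hch'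
  exact hch'
set_option linter.unusedSectionVars false

lemma hamiltonian_of_hamPath [Fintype V] [DecidableRel H.Adj] {u v : V} (P : H.Walk u v)
    (hP : P.IsPath) (hcov : ∀ x, x ∈ P.support) (hnadj : ¬ H.Adj u v)
    (hdeg : Fintype.card V ≤ H.degree u + H.degree v) : H.IsHamiltonian := by
  set p := Fintype.card V with hpdef
  set L := P.support with hLdef
  have hnd : L.Nodup := hP.support_nodup
  have hlen : L.length = p := by
    have h1 : L.toFinset = Finset.univ := Finset.eq_univ_iff_forall.2 (by simpa using hcov)
    have h2 := List.toFinset_card_of_nodup hnd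
    rw [h1, Finset.card_univ] at h2
    omega
  have hp2 : 2 ≤ p := by
    have h1 := H.degree_lt_card_verts u
    have h2 := H.degree_lt_card_verts v
    omega
  have hLne : L ≠ [] := by intro h; rw [h] at hlen; simp at hlen; omega
  set f : ℕ → V := fun i => L.getD i u with hfdef
  have hf : ∀ {i : ℕ} (h : i < p), f i = L[i]'(by omega) := by
    intro i h
    exact List.getD_eq_getElem L u (by omega)
  have hchain : ∀ i : ℕ, i + 1 < p → H.Adj (f i) (f (i + 1)) := by
    intro i hi
    have := List.isChain_iff_getElem.mp (P.isChain_adj_support) i (by rw [← hLdef, hlen]; omega)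
    rw [hf (by omega), hf hi]
    simpa [List.get_eq_getElem] using this
  have hLcons : L = u :: L.tail := P.support_eq_cons
  have hf0 : f 0 = u := by
    show L.getD 0 u = u
    rw [hLcons]
    rfl
  have hlast? : L.getLast? = some v := by
    rw [← List.head?_reverse, hLdef, ← Walk.support_reverse]
    rw [Walk.support_eq_cons]
    simp
  have hLlast : L.getLast hLne = v := by
    have := List.getLast?_eq_getLast hLne
    rw [this] at hlast?
    exact Option.some_inj.mp hlast?
  have hflast : f (p - 1) = v := by
    have h3 : f (p - 1) = L.getLast hLne := by
      show L.getD (p - 1) u = _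
      rw [List.getLast_eq_getElem]
      rw [List.getD_eq_getElem L u (by omega)]
      congr 1
      omega
    rw [h3, hLlast]
  have hfinj : ∀ {i j : ℕ}, i < p → j < p → f i = f j → i = j := by
    intro i j hi hj hij
    rw [hf hi, hf hj] at hij
    exact (List.Nodup.getElem_inj_iff hnd).mp hij
  set S : Finset ℕ := (Finset.range (p - 1)).filter (fun i => H.Adj u (f (i + 1))) with hSdef
  set T : Finset ℕ := (Finset.range (p - 1)).filter (fun i => H.Adj v (f i)) with hTdef
  have hScard : S.card = H.degree u := by
    rw [SimpleGraph.degree]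
    apply Finset.card_bij (fun i _ => f (i + 1))
    · intro i hi
      rw [hSdef, Finset.mem_filter] at hi
      rw [SimpleGraph.mem_neighborFinset]
      exact hi.2
    · intro i hi j hj hij
      rw [hSdef, Finset.mem_filter, Finset.mem_range] at hi hj
      have := hfinj (by omega) (by omega) hij
      omega
    · intro w hw
      rw [SimpleGraph.mem_neighborFinset] at hw
      obtain ⟨j, hj, hjw⟩ := List.getElem_of_mem (hcov w)
      rw [hlen] at hj
      have hjw' : f j = w := by rw [hf hj]; exact hjw
      have hj0 : j ≠ 0 := by
        intro h; subst h; rw [hf0] at hjw'; exact hw.ne' hjw'.symm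
      refine ⟨j - 1, ?_, by rw [Nat.sub_add_cancel (by omega)]; exact hjw'⟩
      rw [hSdef, Finset.mem_filter, Finset.mem_range]
      constructor
      · omega
      · rw [Nat.sub_add_cancel (by omega), hjw']; exact hw
  have hTcard : T.card = H.degree v := by
    rw [SimpleGraph.degree]
    apply Finset.card_bij (fun i _ => f i)
    · intro i hi
      rw [hTdef, Finset.mem_filter] at hi
      rw [SimpleGraph.mem_neighborFinset]
      exact hi.2
    · intro i hi j hj hij
      rw [hTdef, Finset.mem_filter, Finset.mem_range] at hi hj
      exact hfinj (by omega) (by omega) hij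
    · intro w hw
      rw [SimpleGraph.mem_neighborFinset] at hw
      obtain ⟨j, hj, hjw⟩ := List.getElem_of_mem (hcov w)
      rw [hlen] at hj
      have hjw' : f j = w := by rw [hf hj]; exact hjw
      have hjlast : j ≠ p - 1 := by
        intro h; subst h; rw [hflast] at hjw'; exact hw.ne' hjw'.symm
      refine ⟨j, ?_, hjw'⟩
      rw [hTdef, Finset.mem_filter, Finset.mem_range]
      exact ⟨by omega, by rw [hjw']; exact hw⟩
  have hST : (S ∩ T).Nonempty := by
    rw [← Finset.card_pos]
    have h1 := Finset.card_union_add_card_inter S T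
    have h2 : (S ∪ T).card ≤ p - 1 := by
      apply le_trans (Finset.card_le_card ?_) (le_of_eq (Finset.card_range _))
      intro i hi
      rcases Finset.mem_union.mp hi with h | h
      · exact (Finset.mem_filter.mp h).1
      · exact (Finset.mem_filter.mp h).1
    omega
  obtain ⟨i, hiST⟩ := hST
  rw [Finset.mem_inter, hSdef, hTdef, Finset.mem_filter, Finset.mem_filter, Finset.mem_range] at hiST
  obtain ⟨⟨hilt, hui1⟩, -, hvi⟩ := hiST
  have hi0 : i ≠ 0 := by
    intro h; subst h; rw [hf0] at hvi; exact hnadj hvi.symm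
  have hi1 : i + 1 ≠ p - 1 := by
    intro h; rw [h, hflast] at hui1; exact hnadj hui1
  have hp3 : 3 ≤ p := by omega
  set t : List V := (L.tail.take i) ++ (L.drop (i + 1)).reverse with htdef
  have hKey : u :: t = L.take (i + 1) ++ (L.drop (i + 1)).reverse := by
    rw [htdef]
    conv_rhs => rw [hLcons]
    simp [List.take_cons]
  have hperm : (u :: t) ~ L := by
    rw [hKey]
    calc L.take (i+1) ++ (L.drop (i+1)).reverse
        ~ L.take (i+1) ++ L.drop (i+1) := List.Perm.append_left _ (List.reverse_perm _)
      _ = L := List.take_append_drop _ _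
  have hnd' : (u :: t).Nodup := hperm.nodup_iff.mpr hnd
  have hcov' : ∀ x, x ∈ u :: t := fun x => hperm.mem_iff.mpr (hcov x)
  have htlen : 2 ≤ t.length := by
    have := hperm.length_eq
    simp only [List.length_cons, hlen] at this
    omega
  have hdne : L.drop (i+1) ≠ [] := by
    intro h
    have := congrArg List.length h
    simp only [List.length_drop, hlen, List.length_nil] at this
    omega
  apply isHamiltonian_of_chain u t htlen ?_ hnd' hcov'
  have hichain : List.IsChain H.Adj (u :: (t ++ [u])) := by
    have heq : u :: (t ++ [u]) = (L.take (i+1)) ++ ((L.drop (i+1)).reverse ++ [u]) := by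
      rw [← List.append_assoc, ← hKey]; simp
    rw [heq]
    have hLchain : List.IsChain H.Adj L := P.isChain_adj_support
    rw [List.isChain_append]
    refine ⟨hLchain.take _, ?_, ?_⟩
    · rw [List.isChain_append]
      refine ⟨?_, by simp, ?_⟩
      · rw [List.isChain_reverse]
        exact List.IsChain.imp (fun a b hab => hab.symm) (hLchain.drop _)
      · intro x hx y hy
        simp only [List.head?_cons, Option.mem_some_iff] at hy
        subst hy
        rw [List.getLast?_reverse, List.head?_drop] at hx
        have hsome : L[i+1]? = some (f (i+1)) := by
          rw [List.getElem?_eq_getElem (by omega), hf (by omega)]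
        rw [hsome, Option.mem_some_iff] at hx
        subst hx
        exact hui1.symm
    · intro x hx y hy
      have hyv : y = v := by
        rw [List.head?_append, List.head?_reverse] at hy
        have h2 : L.getLast? = (L.drop (i+1)).getLast? := by
          conv_lhs => rw [← List.take_append_drop (i+1) L]
          rw [List.getLast?_append, List.getLast?_eq_getLast hdne]
          rfl
        rw [← h2, hlast?] at hy
        exact (by simpa using hy : v = y).symm
      subst hyv
      have hxfi : x = f i := by
        rw [List.take_succ, List.getLast?_append] at hx
        have hsome : L[i]? = some (f i) := by
          rw [List.getElem?_eq_getElem (by omega), hf (by omega)]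
        rw [hsome] at hx
        exact (by simpa using hx : f i = x).symm
      subst hxfi
      exact hvi.symm
  exact hichain

lemma exists_append_edge {w u v : V} (q : H.Walk w u) (hq : q.IsPath)
    (he : s(u, v) ∈ q.edges) :
    ∃ (q' : H.Walk w v) (h' : H.Adj v u), q = q'.append (Walk.cons h' Walk.nil) := by
  induction q with
  | nil => simp at he
  | @cons w x _ h r ih =>
    rw [Walk.edges_cons, List.mem_cons] at he
    rcases he with he | he
    · rw [Sym2.eq_iff] at he
      rcases he with ⟨rfl, rfl⟩ | ⟨rfl, rfl⟩
      · exfalso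
        have h1 := hq.support_nodup
        rw [Walk.support_cons, List.nodup_cons] at h1
        exact h1.1 r.end_mem_support
      · have hr : r = Walk.nil := Walk.isPath_iff_eq_nil.mp hq.of_cons
        subst hr
        exact ⟨Walk.nil, h, rfl⟩
    · obtain ⟨q₂, h', hq₂⟩ := ih hq.of_cons he
      exact ⟨Walk.cons h q₂, h', by rw [hq₂]; rfl⟩

lemma ore_step [Fintype V] (H : SimpleGraph V) [DecidableRel H.Adj] (u v : V) (hne : u ≠ v) (hnadj : ¬ H.Adj u v)
    (hdeg : Fintype.card V ≤ H.degree u + H.degree v)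
    (hham : (H ⊔ SimpleGraph.fromEdgeSet {s(u, v)}).IsHamiltonian) : H.IsHamiltonian := by
  classical
  set H' := H ⊔ SimpleGraph.fromEdgeSet {s(u, v)} with hH'def
  have hcard : Fintype.card V ≠ 1 := by
    intro h
    exact hne (Fintype.card_le_one_iff.mp (le_of_eq h) u v)
  obtain ⟨a, c, hc⟩ := hham hcard
  have hedgeH : ∀ e ∈ H'.edgeSet, e ≠ s(u,v) → e ∈ H.edgeSet := by
    intro e hee hne'
    rw [hH'def, SimpleGraph.edgeSet_sup, SimpleGraph.edgeSet_fromEdgeSet] at hee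
    rcases hee with h | h
    · exact h
    · exact absurd h.1 (by simpa using hne')
  by_cases hmem : s(u, v) ∈ c.edges
  · have hu : u ∈ c.support := hc.mem_support u
    set c₂ := c.rotate u hu with hc₂def
    have hc₂ : c₂.IsHamiltonianCycle := by
      rw [Walk.isHamiltonianCycle_iff_isCycle_and_support_count_tail_eq_one]
      refine ⟨hc.isCycle.rotate hu, fun x => ?_⟩
      have hrot := c.support_rotate u hu
      rw [hrot.perm.count_eq]
      exact (Walk.isHamiltonianCycle_iff_isCycle_and_support_count_tail_eq_one.mp hc).2 x
    have hmem₂ : s(u,v) ∈ c₂.edges := (c.rotate_edges u hu).mem_iff.mpr hmem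
    clear_value c₂
    clear hc₂def
    cases c₂ with
    | nil => exact absurd rfl hc₂.isCycle.ne_nil
    | @cons _ b _ h q =>
      have hq : q.IsPath ∧ s(u, b) ∉ q.edges := (Walk.cons_isCycle_iff q h).mp hc₂.isCycle
      have hcsup : ∀ x, x ∈ u :: q.support := fun x => by
        have := hc₂.mem_support x
        rwa [Walk.support_cons] at this
      by_cases hbv : b = v
      · subst hbv
        have hqe : ∀ e ∈ q.edges, e ∈ H.edgeSet := fun e hee =>
          hedgeH e (q.edges_subset_edgeSet hee) (fun heq => hq.2 (heq ▸ hee))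
        set q₀ := q.transfer H hqe with hq₀def
        have hq₀path : q₀.IsPath := hq.1.transfer hqe
        have hq₀cov : ∀ x, x ∈ q₀.support := by
          intro x
          rw [hq₀def, Walk.support_transfer]
          rcases List.mem_cons.mp (hcsup x) with rfl | hx
          · exact q.end_mem_support
          · exact hx
        exact hamiltonian_of_hamPath q₀ hq₀path hq₀cov (fun hadj => hnadj hadj.symm)
          (by omega)
      · have hne_ub : s(u,v) ≠ s(u,b) := by
          intro heq
          rw [Sym2.eq_iff] at heq
          rcases heq with ⟨-, hvb⟩ | ⟨hub, -⟩
          · exact hbv hvb.symm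
          · exact h.ne hub
        have hqe : s(u,v) ∈ q.edges := by
          rw [Walk.edges_cons, List.mem_cons] at hmem₂
          rcases hmem₂ with h1 | h1
          · exact absurd h1 hne_ub
          · exact h1
        obtain ⟨q', h', hqeq⟩ := exists_append_edge q hq.1 hqe
        have hqsup : q.support = q'.support ++ [u] := by
          rw [hqeq, Walk.support_append]
          simp
        have hqedges : q.edges = q'.edges ++ [s(v,u)] := by
          rw [hqeq, Walk.edges_append]
          simp
        have htrail : (s(u,b) :: q.edges).Nodup := by
          have := hc₂.isCycle.isTrail.edges_nodup
          rwa [Walk.edges_cons] at this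
        have hsvu_notin : s(v,u) ∉ s(u,b) :: q'.edges := by
          rw [hqedges] at htrail
          rcases List.nodup_cons.mp htrail with ⟨hn1, hn2⟩
          rcases List.nodup_append.mp hn2 with ⟨-, -, hdisj⟩
          intro hmem'
          rcases List.mem_cons.mp hmem' with heq | hmem''
          · exact hn1 (by rw [← heq]; exact List.mem_append_right _ (List.mem_singleton_self _))
          · exact hdisj _ hmem'' _ (List.mem_singleton_self _) rfl
        set P := Walk.cons h q' with hPdef
        have hPedges : ∀ e ∈ P.edges, e ∈ H.edgeSet := by
          intro e hee
          refine hedgeH e (P.edges_subset_edgeSet hee) ?_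
          intro heq
          apply hsvu_notin
          rw [← Sym2.eq_swap (a := u) (b := v), ← heq]
          rw [hPdef, Walk.edges_cons] at hee
          exact hee
        have hPsup : P.support = u :: q'.support := by rw [hPdef, Walk.support_cons]
        have hPpath : P.IsPath := by
          apply Walk.IsPath.mk'
          rw [hPsup]
          have hnd := hc₂.isCycle.support_nodup
          rw [Walk.support_cons, List.tail_cons, hqsup, List.nodup_append] at hnd
          rw [List.nodup_cons]
          exact ⟨fun hx => hnd.2.2 _ hx _ (List.mem_singleton_self _) rfl, hnd.1⟩
        have hPcov : ∀ x, x ∈ P.support := by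
          intro x
          rw [hPsup]
          rcases List.mem_cons.mp (hcsup x) with rfl | hx
          · exact List.mem_cons_self
          · rw [hqsup] at hx
            rcases List.mem_append.mp hx with hx | hx
            · exact List.mem_cons_of_mem _ hx
            · rw [List.mem_singleton] at hx
              subst hx
              exact List.mem_cons_self
        set P₀ := P.transfer H hPedges with hP₀def
        refine hamiltonian_of_hamPath P₀ (hPpath.transfer hPedges) ?_ hnadj hdeg
        intro x
        rw [hP₀def, Walk.support_transfer]
        exact hPcov x
  · have hce : ∀ e ∈ c.edges, e ∈ H.edgeSet := fun e hee =>
      hedgeH e (c.edges_subset_edgeSet hee) (fun h => hmem (h ▸ hee))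
    refine fun _ => ⟨a, c.transfer H hce, ?_⟩
    rw [Walk.isHamiltonianCycle_iff_isCycle_and_support_count_tail_eq_one]
    refine ⟨⟨⟨⟨?_⟩, ?_⟩, ?_⟩, ?_⟩
    · rw [Walk.edges_transfer]
      exact hc.isCycle.isTrail.edges_nodup
    · intro hnil
      have hlt := Walk.length_transfer c hce
      rw [hnil] at hlt
      simp only [Walk.length_nil] at hlt
      have h3 := hc.isCycle.three_le_length
      omega
    · rw [Walk.support_transfer]
      exact hc.isCycle.support_nodup
    · intro x
      rw [Walk.support_transfer]
      exact (Walk.isHamiltonianCycle_iff_isCycle_and_support_count_tail_eq_one.mp hc).2 x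

lemma closure_hamiltonian [Fintype V] (G : SimpleGraph V) (hp3 : 3 ≤ Fintype.card V)
    (hstep : ∀ H : SimpleGraph V, ∀ _inst : DecidableRel H.Adj, G ≤ H → H ≠ ⊤ →
      ∃ u v, u ≠ v ∧ ¬H.Adj u v ∧ Fintype.card V ≤ H.degree u + H.degree v) :
    G.IsHamiltonian := by
  classical
  suffices h : ∀ m (H : SimpleGraph V), G ≤ H → Hᶜ.edgeSet.ncard ≤ m → H.IsHamiltonian by
    exact h (Gᶜ.edgeSet.ncard) G le_rfl le_rfl
  intro m
  induction m with
  | zero =>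
    intro H hle hcard
    have h0 : Hᶜ.edgeSet = ∅ :=
      (Set.ncard_eq_zero (Set.toFinite _)).mp (Nat.le_zero.mp hcard)
    have h1 : Hᶜ = ⊥ := SimpleGraph.edgeSet_eq_empty.mp h0
    have hHtop : H = ⊤ := by rwa [compl_eq_bot] at h1
    rw [hHtop]
    exact top_isHamiltonian hp3
  | succ m ih =>
    intro H hle hcard
    by_cases htop : H = ⊤
    · rw [htop]; exact top_isHamiltonian hp3
    · obtain ⟨u, v, huv, hnadj, hdeg⟩ := hstep H inferInstance hle htop
      apply ore_step H u v huv hnadj hdeg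
      apply ih (H ⊔ SimpleGraph.fromEdgeSet {s(u,v)}) (le_trans hle le_sup_left)
      have hsub : (H ⊔ SimpleGraph.fromEdgeSet {s(u,v)})ᶜ.edgeSet ⊆ Hᶜ.edgeSet :=
        SimpleGraph.edgeSet_mono (compl_le_compl le_sup_left)
      have hmem : s(u,v) ∈ Hᶜ.edgeSet := by
        rw [SimpleGraph.mem_edgeSet]
        exact ⟨huv, hnadj⟩
      have hnotmem : s(u,v) ∉ (H ⊔ SimpleGraph.fromEdgeSet {s(u,v)})ᶜ.edgeSet := by
        rw [SimpleGraph.mem_edgeSet, SimpleGraph.compl_adj]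
        intro hmem2
        exact hmem2.2 (Or.inr ((SimpleGraph.fromEdgeSet_adj _).mpr ⟨rfl, huv⟩))
      have hss : (H ⊔ SimpleGraph.fromEdgeSet {s(u,v)})ᶜ.edgeSet ⊂ Hᶜ.edgeSet :=
        (Set.ssubset_iff_of_subset hsub).mpr ⟨s(u,v), hmem, hnotmem⟩
      have := Set.ncard_lt_ncard hss (Set.toFinite _)
      omega

lemma good_pair [Fintype V] {n₀ : ℕ} (Kc D H : SimpleGraph V)
    [DecidableRel Kc.Adj] [DecidableRel D.Adj] [DecidableRel H.Adj]
    (hcard : Fintype.card V = 2 * n₀ + 2)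
    (hcompl : Hᶜ ≤ Kc ⊔ D)
    (hKc : ∀ w, Kc.degree w + 1 ≤ n₀)
    (hD : D.edgeSet.ncard ≤ n₀)
    (htop : H ≠ ⊤) :
    ∃ u v, u ≠ v ∧ ¬H.Adj u v ∧ Fintype.card V ≤ H.degree u + H.degree v := by
  classical
  have hDcc : D.edgeFinset.card = D.edgeSet.ncard := by
    rw [← SimpleGraph.coe_edgeFinset, Set.ncard_coe_finset]
  replace hD : D.edgeFinset.card ≤ n₀ := by omega
  -- a nonadjacent pair exists
  obtain ⟨u₀, v₀, hu₀v₀, hnadj₀⟩ : ∃ a b, a ≠ b ∧ ¬H.Adj a b := by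
    by_contra hcon
    push_neg at hcon
    apply htop
    ext a b
    simp only [SimpleGraph.top_adj]
    exact ⟨fun h => h.ne, fun h => hcon a b h⟩
  set s : Finset (V × V) := Finset.univ.filter (fun x : V × V => x.1 ≠ x.2 ∧ ¬ H.Adj x.1 x.2)
    with hsdef
  have hsne : s.Nonempty := ⟨(u₀, v₀), by simp [hsdef, hu₀v₀, hnadj₀]⟩
  obtain ⟨⟨u', v'⟩, hs', hmax'⟩ := Finset.exists_max_image s
    (fun x => H.degree x.1 + H.degree x.2) hsne
  rw [hsdef, Finset.mem_filter] at hs'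
  obtain ⟨u, v, hune, hnadj, hdle, hmax⟩ : ∃ u v, u ≠ v ∧ ¬H.Adj u v ∧
      H.degree u ≤ H.degree v ∧ ∀ a b, a ≠ b → ¬H.Adj a b →
        H.degree a + H.degree b ≤ H.degree u + H.degree v := by
    rcases le_total (H.degree u') (H.degree v') with hle | hle
    · exact ⟨u', v', hs'.2.1, hs'.2.2, hle, fun a b ha hb => hmax' (a, b)
        (by simp [hsdef, ha, hb])⟩
    · refine ⟨v', u', hs'.2.1.symm, fun hh => hs'.2.2 hh.symm, hle, fun a b ha hb => ?_⟩
      have := hmax' (a, b) (by simp [hsdef, ha, hb])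
      simp only at this
      omega
  by_cases hfinal : Fintype.card V ≤ H.degree u + H.degree v
  · exact ⟨u, v, hune, hnadj, hfinal⟩
  exfalso
  set p := Fintype.card V
  -- basic degree relations
  have degc : ∀ w : V, H.degree w + Hᶜ.degree w + 1 = p := by
    intro w
    have h1 := SimpleGraph.degree_compl H w
    have h2 := H.degree_lt_card_verts w
    omega
  have dbound : ∀ w : V, Hᶜ.degree w ≤ Kc.degree w + D.degree w := by
    intro w
    have hsubn : Hᶜ.neighborFinset w ⊆ Kc.neighborFinset w ∪ D.neighborFinset w := by
      intro x hx
      rw [SimpleGraph.mem_neighborFinset] at hx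
      have := hcompl hx
      rw [SimpleGraph.sup_adj] at this
      rcases this with h | h
      · exact Finset.mem_union_left _ ((SimpleGraph.mem_neighborFinset _ _ _).mpr h)
      · exact Finset.mem_union_right _ ((SimpleGraph.mem_neighborFinset _ _ _).mpr h)
    calc Hᶜ.degree w = (Hᶜ.neighborFinset w).card := rfl
      _ ≤ (Kc.neighborFinset w ∪ D.neighborFinset w).card := Finset.card_le_card hsubn
      _ ≤ _ := Finset.card_union_le _ _
  have hDdeg_le : ∀ w : V, D.degree w ≤ D.edgeFinset.card := by
    intro w
    rw [← SimpleGraph.card_incidenceFinset_eq_degree]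
    apply Finset.card_le_card
    intro e he
    rw [SimpleGraph.mem_incidenceFinset] at he
    rw [SimpleGraph.mem_edgeFinset]
    exact he.1
  have hpair : ∀ w₁ w₂ : V, w₁ ≠ w₂ →
      D.degree w₁ + D.degree w₂ ≤ D.edgeFinset.card + 1 := by
    intro w₁ w₂ hw
    rw [← SimpleGraph.card_incidenceFinset_eq_degree D w₁,
      ← SimpleGraph.card_incidenceFinset_eq_degree D w₂]
    have h1 := Finset.card_union_add_card_inter (D.incidenceFinset w₁) (D.incidenceFinset w₂)
    have h2 : (D.incidenceFinset w₁ ∪ D.incidenceFinset w₂).card ≤ D.edgeFinset.card := by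
      apply Finset.card_le_card
      intro e he
      rw [SimpleGraph.mem_edgeFinset]
      rcases Finset.mem_union.mp he with h | h
      · exact ((SimpleGraph.mem_incidenceFinset _ _ _).mp h).1
      · exact ((SimpleGraph.mem_incidenceFinset _ _ _).mp h).1
    have h3 : (D.incidenceFinset w₁ ∩ D.incidenceFinset w₂).card ≤ 1 := by
      have hss : D.incidenceFinset w₁ ∩ D.incidenceFinset w₂ ⊆ {s(w₁, w₂)} := by
        intro e he
        rw [Finset.mem_inter, SimpleGraph.mem_incidenceFinset,
          SimpleGraph.mem_incidenceFinset] at he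
        rw [Finset.mem_singleton]
        exact (Sym2.mem_and_mem_iff hw).mp ⟨he.1.2, he.2.2⟩
      calc _ ≤ ({s(w₁,w₂)} : Finset (Sym2 V)).card := Finset.card_le_card hss
        _ = 1 := Finset.card_singleton _
    omega
  have hhand : ∑ w : V, D.degree w = 2 * D.edgeFinset.card :=
    SimpleGraph.sum_degrees_eq_twice_card_edges D
  set A := Hᶜ.neighborFinset v with hAdef
  have hAcard : A.card = Hᶜ.degree v := rfl
  have hAw : ∀ w ∈ A, H.degree w ≤ H.degree u := by
    intro w hw
    rw [hAdef, SimpleGraph.mem_neighborFinset, SimpleGraph.compl_adj] at hw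
    have := hmax w v (fun hh => hw.1 hh.symm) (fun hh => hw.2 hh.symm)
    omega
  have hDA : ∀ w ∈ A, n₀ + 2 ≤ H.degree u + D.degree w := by
    intro w hw
    have h1 := degc w
    have h2 := dbound w
    have h3 := hAw w hw
    have h4 := hKc w
    omega
  have huA : u ∈ A := by
    rw [hAdef, SimpleGraph.mem_neighborFinset, SimpleGraph.compl_adj]
    exact ⟨hune.symm, fun hh => hnadj hh.symm⟩
  have h2deg : 2 ≤ H.degree u := by
    have h1 := degc u
    have h2 := dbound u
    have h3 := hDdeg_le u
    have h4 := hKc u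
    omega
  have hAbig : H.degree u ≤ A.card := by
    have h1 := degc v
    omega
  obtain ⟨w, hwA, hwu⟩ := Finset.exists_mem_ne (by omega : 1 < A.card) u
  have hbig : n₀ + 3 ≤ 2 * H.degree u := by
    have h1 := hDA u huA
    have h2 := hDA w hwA
    have h3 := hpair u w (fun hh => hwu hh.symm)
    omega
  have hdu_le : H.degree u ≤ n₀ := by omega
  have hsumA : A.card * (n₀ + 2 - H.degree u) ≤ 2 * n₀ := by
    calc A.card * (n₀ + 2 - H.degree u)
        ≤ ∑ w ∈ A, D.degree w := by
          rw [← smul_eq_mul]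
          apply Finset.card_nsmul_le_sum
          intro x hx
          have := hDA x hx
          omega
      _ ≤ ∑ w : V, D.degree w := Finset.sum_le_sum_of_subset (Finset.subset_univ A)
      _ = 2 * D.edgeFinset.card := hhand
      _ ≤ 2 * n₀ := by omega
  by_cases hcase : H.degree u + 1 ≤ n₀
  · -- 2 ≤ h ≤ n₀ - 1 : contradiction via product
    have hkey : H.degree u * (n₀ + 2 - H.degree u) ≤ 2 * n₀ :=
      le_trans (Nat.mul_le_mul_right _ hAbig) hsumA
    have h4 : 4 ≤ H.degree u := by omega
    have hkeyZ : (H.degree u : ℤ) * ((n₀ : ℤ) + 2 - H.degree u) ≤ 2 * n₀ := by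
      have : ((n₀ + 2 - H.degree u : ℕ) : ℤ) = (n₀ : ℤ) + 2 - H.degree u := by
        push_cast [Nat.cast_sub (by omega : H.degree u ≤ n₀ + 2)]
        ring
      calc (H.degree u : ℤ) * ((n₀ : ℤ) + 2 - H.degree u)
          = ((H.degree u * (n₀ + 2 - H.degree u) : ℕ) : ℤ) := by push_cast [this]; ring
        _ ≤ 2 * n₀ := by exact_mod_cast hkey
    have hprod : (2 : ℤ) * 1 ≤ ((H.degree u : ℤ) - 2) * ((n₀ : ℤ) - H.degree u) := by
      apply mul_le_mul
      · push_cast; omega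
      · push_cast; omega
      · norm_num
      · push_cast; omega
    nlinarith [hkeyZ, hprod]
  · -- H.degree u = n₀
    have hdu : H.degree u = n₀ := by omega
    have hvA : v ∉ A := by
      rw [hAdef, SimpleGraph.mem_neighborFinset]
      exact fun hh => (SimpleGraph.irrefl _) hh
    have hDv : 1 ≤ D.degree v := by
      have h1 := degc v
      have h2 := dbound v
      have h3 := hKc v
      have h4 : n₀ ≤ A.card := by omega
      omega
    have hsum2 : A.card * 2 ≤ ∑ x ∈ A, D.degree x := by
      have := Finset.card_nsmul_le_sum A (fun x => D.degree x) 2 (fun x hx => by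
        show 2 ≤ D.degree x
        have := hDA x hx; omega)
      rwa [smul_eq_mul] at this
    have hins : ∑ x ∈ insert v A, D.degree x = D.degree v + ∑ x ∈ A, D.degree x :=
      Finset.sum_insert hvA
    have hle2 : ∑ x ∈ insert v A, D.degree x ≤ 2 * n₀ := by
      calc ∑ x ∈ insert v A, D.degree x
          ≤ ∑ x : V, D.degree x := Finset.sum_le_sum_of_subset (Finset.subset_univ _)
        _ = 2 * D.edgeFinset.card := hhand
        _ ≤ 2 * n₀ := by omega
    have hcA : n₀ ≤ A.card := by omega
    have : A.card * 2 ≥ n₀ * 2 := Nat.mul_le_mul_right _ hcA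
    omega

end HamiltonianHelpers

/-- Theorem 22 / `evenhalf-1`: Let `k ≥ 3` and `(n 0, …, n (k-1))` be positive
integers with `n 0 ≥ … ≥ n (k-1)` and `p = ∑ n i`. If `p` is even and `n 0 = p/2 − 1`
(i.e. `p = 2 * n 0 + 2`), then every `k`-partite graph `G` with these part sizes having at least
`(4 − 2p + 2 n 0 + Σᵢ n i (p − n i))/2` edges is hamiltonian. -/
theorem kpartite_edges_hamiltonian_of_even_half_minus_one
    (k : ℕ) (hk : 3 ≤ k) (n : Fin k → ℕ) (hpos : ∀ i, 0 < n i) (hmono : Antitone n)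
    (hp : ∑ i, n i = 2 * n ⟨0, by omega⟩ + 2)
    (G : SimpleGraph ((i : Fin k) × Fin (n i)))
    (hG : G ≤ completeMultipartiteGraph (fun i => Fin (n i)))
    (hedges : 4 - 2 * (∑ i, (n i : ℤ)) + 2 * (n ⟨0, by omega⟩ : ℤ) +
        ∑ i, (n i : ℤ) * ((∑ j, (n j : ℤ)) - (n i : ℤ)) ≤ 2 * (G.edgeSet.ncard : ℤ)) :
    G.IsHamiltonian := by
  classical
  set K : SimpleGraph ((i : Fin k) × Fin (n i)) := completeMultipartiteGraph (fun i => Fin (n i)) with hKdef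
  set n₀ : ℕ := n ⟨0, by omega⟩ with hn₀def
  set p : ℕ := ∑ i, n i with hpsum
  have hn₀pos : 0 < n₀ := hpos _
  have hnle : ∀ i : Fin k, n i ≤ n₀ := fun i => hmono (by
    show (⟨0, by omega⟩ : Fin k) ≤ i
    simp [Fin.le_def])
  have hcardV : Fintype.card ((i : Fin k) × Fin (n i)) = p := by
    rw [hpsum]
    simp [Fintype.card_sigma]
  have hKadj : ∀ v w : (i : Fin k) × Fin (n i), K.Adj v w ↔ v.1 ≠ w.1 := by
    intro v w
    rw [hKdef]
    exact SimpleGraph.comap_adj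
  -- fiber cardinality
  have hfiber : ∀ i : Fin k, (Finset.univ.filter (fun w : (i : Fin k) × Fin (n i) => w.1 = i)).card = n i := by
    intro i
    rw [Finset.card_filter, ← Finset.univ_sigma_univ, Finset.sum_sigma]
    have hx : ∀ j : Fin k, (∑ x : Fin (n j), if (⟨j, x⟩ : (i : Fin k) × Fin (n i)).1 = i then 1 else 0)
        = if j = i then n j else 0 := by
      intro j
      by_cases h : j = i
      · subst h; simp
      · simp [h]
    rw [Finset.sum_congr rfl (fun j _ => hx j), Finset.sum_ite_eq']
    simp
  have hfle : ∀ i : Fin k, n i ≤ p := by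
    intro i
    have := hfiber i
    have hsub := Finset.card_le_card (Finset.filter_subset (fun w : (i : Fin k) × Fin (n i) => w.1 = i) Finset.univ)
    rw [this, Finset.card_univ, hcardV] at hsub
    exact hsub
  -- degree in K
  have hKdeg : ∀ v : (i : Fin k) × Fin (n i), K.degree v + n v.1 = p := by
    intro v
    have hnb : K.neighborFinset v = Finset.univ \ (Finset.univ.filter (fun w : (i : Fin k) × Fin (n i) => w.1 = v.1)) := by
      ext x
      rw [SimpleGraph.mem_neighborFinset, hKadj]
      simp [eq_comm]
    rw [SimpleGraph.degree, hnb, Finset.card_sdiff_of_subset (Finset.filter_subset _ _), hfiber,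
      Finset.card_univ, hcardV]
    have := hfle v.1
    omega
  -- degree in Kᶜ
  have hKc : ∀ v : (i : Fin k) × Fin (n i), Kᶜ.degree v + 1 ≤ n₀ := by
    intro v
    have hnb : Kᶜ.neighborFinset v = (Finset.univ.filter (fun w : (i : Fin k) × Fin (n i) => w.1 = v.1)).erase v := by
      ext x
      rw [SimpleGraph.mem_neighborFinset, SimpleGraph.compl_adj, hKadj]
      simp only [Finset.mem_erase, Finset.mem_filter, Finset.mem_univ, true_and]
      constructor
      · rintro ⟨h1, h2⟩
        exact ⟨fun hh => h1 hh.symm, (not_not.mp h2).symm⟩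
      · rintro ⟨h1, h2⟩
        exact ⟨fun hh => h1 hh.symm, not_not.mpr h2.symm⟩
    rw [SimpleGraph.degree, hnb, Finset.card_erase_of_mem (by simp)]
    rw [hfiber]
    have h1 := hpos v.1
    have h2 := hnle v.1
    omega
  -- handshake for K
  have hKsum : ∑ v : (i : Fin k) × Fin (n i), K.degree v = ∑ i, n i * (p - n i) := by
    rw [← Finset.univ_sigma_univ, Finset.sum_sigma]
    refine Finset.sum_congr rfl fun i _ => ?_
    have : ∀ x : Fin (n i), K.degree ⟨i, x⟩ = p - n i := by
      intro x
      have h : K.degree ⟨i, x⟩ + n i = p := hKdeg ⟨i, x⟩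
      omega
    rw [Finset.sum_congr rfl (fun x _ => this x), Finset.sum_const, Finset.card_univ,
      Fintype.card_fin, smul_eq_mul]
  have hKedges : 2 * K.edgeFinset.card = ∑ i, n i * (p - n i) := by
    rw [← SimpleGraph.sum_degrees_eq_twice_card_edges, hKsum]
  -- translate hedges
  have hGcard : (G.edgeSet.ncard : ℤ) = (G.edgeFinset.card : ℤ) := by
    rw [← SimpleGraph.coe_edgeFinset, Set.ncard_coe_finset]
  have hsumZ : (∑ i, (n i : ℤ)) = (p : ℤ) := by rw [hpsum]; push_cast; ring
  have hprodZ : (∑ i, (n i : ℤ) * ((∑ j, (n j : ℤ)) - (n i : ℤ)))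
      = ((∑ i, n i * (p - n i) : ℕ) : ℤ) := by
    rw [Nat.cast_sum]
    refine Finset.sum_congr rfl fun i _ => ?_
    rw [hsumZ, Nat.cast_mul, Nat.cast_sub (hfle i)]
  have hedges' : (2 : ℤ) * K.edgeFinset.card ≤ 2 * G.edgeFinset.card + 2 * n₀ := by
    have h1 : ((2 * K.edgeFinset.card : ℕ) : ℤ) = ((∑ i, n i * (p - n i) : ℕ) : ℤ) := by
      exact_mod_cast hKedges
    rw [hprodZ, hsumZ, hGcard] at hedges
    have hp' : (p : ℤ) = 2 * n₀ + 2 := by exact_mod_cast hp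
    push_cast at h1 ⊢
    omega
  have hGsub : G.edgeFinset ⊆ K.edgeFinset := SimpleGraph.edgeFinset_subset_edgeFinset.mpr hG
  set D : SimpleGraph ((i : Fin k) × Fin (n i)) := K \ G with hDdef
  have hKecard : K.edgeSet.ncard = K.edgeFinset.card := by
    rw [← SimpleGraph.coe_edgeFinset, Set.ncard_coe_finset]
  have hGecard : G.edgeSet.ncard = G.edgeFinset.card := by
    rw [← SimpleGraph.coe_edgeFinset, Set.ncard_coe_finset]
  have hDecard : D.edgeSet.ncard = D.edgeFinset.card := by
    rw [← SimpleGraph.coe_edgeFinset, Set.ncard_coe_finset]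
  have hsubset : G.edgeSet ⊆ K.edgeSet := SimpleGraph.edgeSet_mono hG
  have hDset : D.edgeSet = K.edgeSet \ G.edgeSet := by
    rw [hDdef, SimpleGraph.edgeSet_sdiff]
  have hDn : D.edgeSet.ncard = K.edgeSet.ncard - G.edgeSet.ncard := by
    rw [hDset, Set.ncard_diff hsubset (Set.toFinite _)]
  have hGle : G.edgeSet.ncard ≤ K.edgeSet.ncard := Set.ncard_le_ncard hsubset (Set.toFinite _)
  have hDedges : D.edgeSet.ncard ≤ n₀ := by omega
  -- apply the closure machinery
  have hp3 : 3 ≤ Fintype.card ((i : Fin k) × Fin (n i)) := by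
    rw [hcardV]
    omega
  apply closure_hamiltonian G hp3
  intro H _inst hleH htopH
  apply good_pair Kᶜ D H
  · rw [hcardV]; exact hp
  · -- Hᶜ ≤ Kᶜ ⊔ D
    intro a b hab
    rw [SimpleGraph.compl_adj] at hab
    rw [SimpleGraph.sup_adj]
    by_cases hK' : K.Adj a b
    · refine Or.inr ?_
      rw [hDdef, SimpleGraph.sdiff_adj]
      exact ⟨hK', fun hGadj => hab.2 (hleH hGadj)⟩
    · exact Or.inl ((SimpleGraph.compl_adj K a b).mpr ⟨hab.1, hK'⟩)
  · exact hKc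
  · exact hDedges
  · exact htopH
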